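/- For positive semidefinite operators A, B with A + B positive definite, tr[A · (B/(A+B))] ≤ (1/2)(tr[A+B] − ‖A−B‖₁), where X/Y := ∫₀^∞ (λ+Y)⁻¹ X (λ+Y)⁻¹ dλ and ‖·‖₁ is the trace norm. -/

import Mathlib

open MeasureTheory Matrix Set ComplexOrder

variable {m : Type*} [Fintype m] [DecidableEq m]

/-- The integral matrix quotient `A/B := ∫₀^∞ (λ+B)⁻¹ A (λ+B)⁻¹ dλ`, defined entrywise. -/
noncomputable def mq (A B : Matrix m m ℂ) : Matrix m m ℂ :=
  Matrix.of fun i j =>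
    ∫ l in Set.Ioi (0:ℝ),
      ((l • (1 : Matrix m m ℂ) + B)⁻¹ * A * (l • (1 : Matrix m m ℂ) + B)⁻¹) i j

/-- Real power of a Hermitian matrix via the spectral decomposition (junk value `0` otherwise). -/
noncomputable def mrpow (A : Matrix m m ℂ) (r : ℝ) : Matrix m m ℂ :=
  if h : A.IsHermitian then
    (h.eigenvectorUnitary : Matrix m m ℂ) *
      Matrix.diagonal (fun i => ((h.eigenvalues i ^ r : ℝ) : ℂ)) *
      star (h.eigenvectorUnitary : Matrix m m ℂ)
  else 0

/-- Trace norm of a Hermitian matrix: the sum of the absolute values of its eigenvalues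
(junk value `0` otherwise). -/
noncomputable def traceNorm (A : Matrix m m ℂ) : ℝ :=
  if h : A.IsHermitian then ∑ i, |h.eigenvalues i| else 0

/-- Operator norm of a positive semidefinite (in particular Hermitian) matrix:
its largest eigenvalue (junk value `0` otherwise). -/
noncomputable def opNorm (A : Matrix m m ℂ) : ℝ :=
  if h : A.IsHermitian then ⨆ i, h.eigenvalues i else 0

/-- `Q₂^ι(A‖B) = tr[A (A/B)] = ∫₀^∞ tr[A (t+B)⁻¹ A (t+B)⁻¹] dt`. -/
noncomputable def Q2iota (A B : Matrix m m ℂ) : ℝ :=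
  ∫ t in Set.Ioi (0:ℝ),
    (A * (t • (1 : Matrix m m ℂ) + B)⁻¹ * A * (t • (1 : Matrix m m ℂ) + B)⁻¹).trace.re

/-- A projective measurement: a finite family of mutually orthogonal projections
summing to the identity. -/
structure PVM (m : Type*) [Fintype m] [DecidableEq m] where
  k : ℕ
  P : Fin k → Matrix m m ℂ
  herm : ∀ j, (P j).IsHermitian
  idem : ∀ j, P j * P j = P j
  orth : ∀ j j', j ≠ j' → P j * P j' = 0
  sum_eq : ∑ j, P j = 1

/-- The value `∑_j (tr[ρΛ_j])^α (tr[σΛ_j])^{1-α}` of a projective measurement. -/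
noncomputable def measVal (α : ℝ) (ρ σ : Matrix m m ℂ) (Λ : PVM m) : ℝ :=
  ∑ j, ((ρ * Λ.P j).trace.re) ^ α * ((σ * Λ.P j).trace.re) ^ (1 - α)

/-- The measured Rényi quantity `Q̌_α(ρ‖σ)`: for `α ∈ [1/2,1)` it is the infimum over
projective measurements of `∑_j (tr[ρΛ_j])^α (tr[σΛ_j])^{1-α}`. -/
noncomputable def Qmeas (α : ℝ) (ρ σ : Matrix m m ℂ) : ℝ :=
  sInf {v | ∃ Λ : PVM m, v = measVal α ρ σ Λ}

/-- The measured Rényi divergence `Ď_α(ρ‖σ) = (α-1)⁻¹ log Q̌_α(ρ‖σ)`. -/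
noncomputable def Dmeas (α : ℝ) (ρ σ : Matrix m m ℂ) : ℝ :=
  (1 / (α - 1)) * Real.log (Qmeas α ρ σ)

/-- The classical-quantum state `∑_x P(x) |x⟩⟨x| ⊗ ρ_x` as a matrix on `X × m`. -/
noncomputable def cqState {X : Type*} [Fintype X] [DecidableEq X]
    (P : X → ℝ) (ρ : X → Matrix m m ℂ) : Matrix (X × m) (X × m) ℂ :=
  Matrix.of fun p q => if p.1 = q.1 then (P p.1 : ℂ) * ρ p.1 p.2 q.2 else 0

open Filter in
private lemma aux_hasDeriv {c : ℝ} (hc : 0 < c) {x : ℝ} (hx : x ∈ Set.Ici (0:ℝ)) :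
    HasDerivAt (fun l : ℝ => -(l + c)⁻¹) (((x + c)^2)⁻¹) x := by
  have h1 : HasDerivAt (fun l : ℝ => l + c) 1 x := (hasDerivAt_id x).add_const c
  have hne : x + c ≠ 0 := by have := hx.out; positivity
  have h3 := (h1.inv hne).neg
  refine HasDerivAt.congr_deriv h3 ?_
  rw [neg_div, neg_neg, one_div]

open Filter in
private lemma aux_tendsto {c : ℝ} :
    Tendsto (fun l : ℝ => -(l + c)⁻¹) atTop (nhds 0) := by
  have h : Tendsto (fun l : ℝ => l + c) atTop atTop :=
    tendsto_atTop_add_const_right _ c tendsto_id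
  simpa using h.inv_tendsto_atTop.neg

private lemma aux_integrable_sq {c : ℝ} (hc : 0 < c) :
    IntegrableOn (fun l : ℝ => ((l + c)^2)⁻¹) (Set.Ioi 0) :=
  integrableOn_Ioi_deriv_of_nonneg' (fun x hx => aux_hasDeriv hc hx)
    (fun x _ => by positivity) aux_tendsto

private lemma aux_integral_sq {c : ℝ} (hc : 0 < c) :
    ∫ l in Set.Ioi (0:ℝ), ((l + c)^2)⁻¹ = c⁻¹ := by
  rw [integral_Ioi_of_hasDerivAt_of_nonneg' (fun x hx => aux_hasDeriv hc hx)
    (fun x _ => by positivity) aux_tendsto]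
  simp

private lemma aux_integrable_K {s t : ℝ} (hs : 0 < s) (ht : 0 < t) :
    IntegrableOn (fun l : ℝ => ((l + s) * (l + t))⁻¹) (Set.Ioi 0) := by
  set c := min s t with hcdef
  have hc : 0 < c := lt_min hs ht
  refine Integrable.mono (aux_integrable_sq hc) ?_ ?_
  · apply ContinuousOn.aestronglyMeasurable ?_ measurableSet_Ioi
    intro x hx
    have hx0 : (0:ℝ) < x := hx
    exact (ContinuousWithinAt.mul ((continuous_id.add continuous_const).continuousWithinAt)
      ((continuous_id.add continuous_const).continuousWithinAt)).inv₀ (by simp only [Pi.mul_apply, Pi.add_apply, id]; positivity)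
  · rw [ae_restrict_iff' measurableSet_Ioi]
    filter_upwards with x hx
    have hx0 : (0:ℝ) < x := hx
    have h1 : (x + c)^2 ≤ (x + s) * (x + t) := by
      rcases min_cases s t with ⟨h, h2⟩ | ⟨h, h2⟩ <;> rw [hcdef, h] <;> nlinarith
    rw [Real.norm_eq_abs, Real.norm_eq_abs, abs_of_nonneg (by positivity),
      abs_of_nonneg (by positivity)]
    exact inv_anti₀ (by positivity) h1

private lemma aux_K_ge {s t : ℝ} (hs : 0 < s) (ht : 0 < t) :
    2 / (s + t) ≤ ∫ l in Set.Ioi (0:ℝ), ((l + s) * (l + t))⁻¹ := by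
  have hm : 0 < (s + t) / 2 := by linarith
  have h := aux_integral_sq hm
  have h2 : 2 / (s + t) = ((s + t) / 2)⁻¹ := by field_simp
  rw [h2, ← h]
  refine setIntegral_mono_on (aux_integrable_sq hm) (aux_integrable_K hs ht)
    measurableSet_Ioi ?_
  intro x hx
  have hx0 : (0:ℝ) < x := hx
  have h1 : (x + s) * (x + t) ≤ (x + (s + t)/2)^2 := by nlinarith [sq_nonneg (s - t)]
  exact inv_anti₀ (by positivity) h1

private lemma aux_K_diag {s : ℝ} (hs : 0 < s) :
    ∫ l in Set.Ioi (0:ℝ), ((l + s) * (l + s))⁻¹ = s⁻¹ := by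
  simp_rw [← sq]
  exact aux_integral_sq hs

private lemma conj_mul_conj (U X Y : Matrix m m ℂ) (hU : U * star U = 1) :
    (star U * X * U) * (star U * Y * U) = star U * (X * Y) * U := by
  have h : (star U * X * U) * (star U * Y * U)
      = star U * X * (U * star U) * Y * U := by simp only [Matrix.mul_assoc]
  rw [h, hU, Matrix.mul_one]
  simp only [Matrix.mul_assoc]

private lemma conj_mul_conj' (V X Y : Matrix m m ℂ) (hV : star V * V = 1) :
    (V * X * star V) * (V * Y * star V) = V * (X * Y) * star V := by
  have h : (V * X * star V) * (V * Y * star V)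
      = V * X * (star V * V) * Y * star V := by simp only [Matrix.mul_assoc]
  rw [h, hV, Matrix.mul_one]
  simp only [Matrix.mul_assoc]

private lemma trace_conj' (V X : Matrix m m ℂ) (hV : star V * V = 1) :
    (V * X * star V).trace = X.trace := by
  rw [Matrix.trace_mul_cycle, hV, Matrix.one_mul]

private lemma trace_conj (U X : Matrix m m ℂ) (hU : U * star U = 1) :
    (star U * X * U).trace = X.trace := by
  rw [Matrix.trace_mul_cycle, hU, Matrix.one_mul]

lemma conj_entry (U M : Matrix m m ℂ) (i j : m) :
    (U * M * star U) i j = ∑ p, ∑ q, U i p * M p q * star (U j q) := by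
  rw [Matrix.mul_apply]
  rw [Finset.sum_comm]
  apply Finset.sum_congr rfl
  intro q _
  rw [Matrix.mul_apply, Finset.sum_mul]
  apply Finset.sum_congr rfl
  intro p _
  rw [Matrix.star_apply]

lemma mq_spectral {S B : Matrix m m ℂ} (hS : S.IsHermitian)
    (hd : ∀ i, 0 < hS.eigenvalues i) :
    mq B S = (hS.eigenvectorUnitary : Matrix m m ℂ) *
      (Matrix.of fun p q =>
        (star (hS.eigenvectorUnitary : Matrix m m ℂ) * B *
            (hS.eigenvectorUnitary : Matrix m m ℂ)) p q *
          ((∫ l in Set.Ioi (0:ℝ),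
              ((l + hS.eigenvalues p) * (l + hS.eigenvalues q))⁻¹ : ℝ) : ℂ)) *
      star (hS.eigenvectorUnitary : Matrix m m ℂ) := by
  set U : Matrix m m ℂ := (hS.eigenvectorUnitary : Matrix m m ℂ) with hU
  set d := hS.eigenvalues with hdd
  have hUU : star U * U = 1 := Matrix.mem_unitaryGroup_iff'.mp hS.eigenvectorUnitary.2
  have hUU' : U * star U = 1 := Matrix.mem_unitaryGroup_iff.mp hS.eigenvectorUnitary.2
  set B' : Matrix m m ℂ := star U * B * U with hB'
  have hinv : ∀ l : ℝ, 0 < l → (l • (1:Matrix m m ℂ) + S)⁻¹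
      = U * Matrix.diagonal (fun p => (((l + d p)⁻¹ : ℝ) : ℂ)) * star U := by
    intro l hl
    have hne : ∀ p, (l + d p : ℝ) ≠ 0 := fun p => by have := hd p; positivity
    have hfac : l • (1:Matrix m m ℂ) + S
        = U * Matrix.diagonal (fun p => ((l + d p : ℝ) : ℂ)) * star U := by
      have h1 : Matrix.diagonal (fun p => ((l + d p : ℝ) : ℂ))
          = (l : ℂ) • 1 + Matrix.diagonal (RCLike.ofReal ∘ d) := by
        ext i j
        simp only [Matrix.diagonal_apply, Matrix.add_apply, Matrix.smul_apply,
          Matrix.one_apply, Function.comp_apply]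
        split_ifs with h
        · push_cast; simp [mul_one]
        · simp
      rw [h1, Matrix.mul_add, Matrix.add_mul, Matrix.mul_smul, Matrix.smul_mul,
        Matrix.mul_one, hUU']
      conv_lhs => rw [hS.spectral_theorem, Unitary.conjStarAlgAut_apply]
      congr 1
    rw [hfac]
    apply Matrix.inv_eq_right_inv
    have hDD : Matrix.diagonal (fun p => ((l + d p : ℝ) : ℂ)) *
        Matrix.diagonal (fun p => (((l + d p)⁻¹ : ℝ) : ℂ)) = 1 := by
      rw [Matrix.diagonal_mul_diagonal]
      have h2 : (fun p => ((l + d p : ℝ) : ℂ) * (((l + d p)⁻¹ : ℝ) : ℂ))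
          = fun _ => (1:ℂ) := by
        funext p
        rw [← Complex.ofReal_mul, mul_inv_cancel₀ (hne p), Complex.ofReal_one]
      rw [h2, Matrix.diagonal_one]
    calc U * Matrix.diagonal (fun p => ((l + d p : ℝ) : ℂ)) * star U *
          (U * Matrix.diagonal (fun p => (((l + d p)⁻¹ : ℝ) : ℂ)) * star U)
        = U * (Matrix.diagonal (fun p => ((l + d p : ℝ) : ℂ)) * (star U * U) *
            Matrix.diagonal (fun p => (((l + d p)⁻¹ : ℝ) : ℂ))) * star U := by
          simp only [Matrix.mul_assoc]
      _ = 1 := by rw [hUU, Matrix.mul_one, hDD, Matrix.mul_one, hUU']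
  ext i j
  show (∫ l in Set.Ioi (0:ℝ),
      ((l • (1 : Matrix m m ℂ) + S)⁻¹ * B * (l • (1 : Matrix m m ℂ) + S)⁻¹) i j) = _
  have hint : ∀ p q : m, IntegrableOn
      (fun l : ℝ => (U i p * star (U j q) * B' p q) *
        ((((l + d p) * (l + d q))⁻¹ : ℝ) : ℂ)) (Ioi 0) := by
    intro p q
    exact ((aux_integrable_K (hd p) (hd q)).ofReal).const_mul _
  have hcongr : (∫ l in Set.Ioi (0:ℝ),
      ((l • (1 : Matrix m m ℂ) + S)⁻¹ * B * (l • (1 : Matrix m m ℂ) + S)⁻¹) i j)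
      = ∫ l in Set.Ioi (0:ℝ), ∑ p, ∑ q,
          (U i p * star (U j q) * B' p q) *
            ((((l + d p) * (l + d q))⁻¹ : ℝ) : ℂ) := by
    refine setIntegral_congr_fun measurableSet_Ioi (fun l hl => ?_)
    have hl0 : (0:ℝ) < l := hl
    rw [hinv l hl0]
    have hmid : U * Matrix.diagonal (fun p => (((l + d p)⁻¹ : ℝ) : ℂ)) * star U * B *
        (U * Matrix.diagonal (fun p => (((l + d p)⁻¹ : ℝ) : ℂ)) * star U)
        = U * (Matrix.diagonal (fun p => (((l + d p)⁻¹ : ℝ) : ℂ)) * B' *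
            Matrix.diagonal (fun p => (((l + d p)⁻¹ : ℝ) : ℂ))) * star U := by
      rw [hB']; simp only [Matrix.mul_assoc]
    rw [hmid, conj_entry]
    apply Finset.sum_congr rfl; intro p _
    apply Finset.sum_congr rfl; intro q _
    rw [Matrix.mul_diagonal, Matrix.diagonal_mul]
    have hnep : (l + d p : ℝ) ≠ 0 := by have := hd p; positivity
    have hneq : (l + d q : ℝ) ≠ 0 := by have := hd q; positivity
    push_cast [mul_inv]
    ring
  rw [hcongr]
  rw [integral_finset_sum _ (fun p _ => integrable_finset_sum _ (fun q _ => hint p q))]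
  rw [conj_entry]
  apply Finset.sum_congr rfl; intro p _
  rw [integral_finset_sum _ (fun q _ => hint p q)]
  apply Finset.sum_congr rfl; intro q _
  have hIcast : (∫ a in Ioi (0:ℝ), ((((a + d p) * (a + d q))⁻¹ : ℝ) : ℂ))
      = ((∫ a in Ioi (0:ℝ), (((a + d p) * (a + d q))⁻¹ : ℝ) : ℝ) : ℂ) := integral_ofReal
  rw [integral_const_mul, hIcast, Matrix.of_apply]
  ring

/-- Cheng's tight one-shot error bound for the new pretty good measurement:
`tr[A · (B/(A+B))] ≤ ½(tr[A+B] − ‖A−B‖₁)`. -/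
theorem error_bound (A B : Matrix m m ℂ) (hA : A.PosSemidef) (hB : B.PosSemidef)
    (hAB : (A + B).PosDef) :
    (A * mq B (A + B)).trace.re
      ≤ (1 / 2) * ((A + B).trace.re - traceNorm (A - B)) := by
  classical
  have hS : (A + B).IsHermitian := hAB.1
  set d := hS.eigenvalues with hdd
  have hd : ∀ i, 0 < d i := fun i => hAB.eigenvalues_pos i
  set U : Matrix m m ℂ := (hS.eigenvectorUnitary : Matrix m m ℂ) with hUdef
  have hUU : star U * U = 1 := Matrix.mem_unitaryGroup_iff'.mp hS.eigenvectorUnitary.2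
  have hUU' : U * star U = 1 := Matrix.mem_unitaryGroup_iff.mp hS.eigenvectorUnitary.2
  have hdiagS : star U * (A + B) * U = Matrix.diagonal (RCLike.ofReal ∘ d) := by
    rw [← hS.conjStarAlgAut_star_eigenvectorUnitary, Unitary.conjStarAlgAut_star_apply]
  set B' : Matrix m m ℂ := star U * B * U with hB'def
  set K : m → m → ℝ :=
    fun p q => ∫ l in Set.Ioi (0:ℝ), ((l + d p) * (l + d q))⁻¹ with hKdef
  have hBherm : B'.IsHermitian := by
    have h := Matrix.isHermitian_mul_mul_conjTranspose (star U) hB.1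
    simpa [hB'def, Matrix.star_eq_conjTranspose, Matrix.conjTranspose_conjTranspose] using h
  -- trace formula
  have htrace : (A * mq B (A + B)).trace
      = B.trace - ∑ p, ∑ q, (Complex.normSq (B' p q) : ℂ) * (K q p : ℂ) := by
    rw [mq_spectral hS hd]
    set N : Matrix m m ℂ := Matrix.of (fun p q => B' p q * (K p q : ℂ)) with hNdef
    have h1 : (A * (U * N * star U)).trace = ((star U * A * U) * N).trace := by
      calc (A * (U * N * star U)).trace = ((A * U * N) * star U).trace := by
            simp only [Matrix.mul_assoc]
        _ = (star U * (A * U * N)).trace := Matrix.trace_mul_comm _ _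
        _ = ((star U * A * U) * N).trace := by simp only [Matrix.mul_assoc]
    rw [h1]
    have hA' : star U * A * U = Matrix.diagonal (RCLike.ofReal ∘ d) - B' := by
      have hA2 : A = (A + B) - B := (add_sub_cancel_right A B).symm
      conv_lhs => rw [hA2]
      rw [Matrix.mul_sub, Matrix.sub_mul, hdiagS]
    rw [hA', Matrix.sub_mul, Matrix.trace_sub]
    have h2 : (Matrix.diagonal (RCLike.ofReal ∘ d) * N).trace = B.trace := by
      have hdiag : ∀ p, (Matrix.diagonal (RCLike.ofReal ∘ d) * N).diag p = B' p p := by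
        intro p
        rw [Matrix.diag_apply, Matrix.diagonal_mul, hNdef, Matrix.of_apply]
        have hK : K p p = (d p)⁻¹ := aux_K_diag (hd p)
        rw [hK]
        have hne : (d p : ℝ) ≠ 0 := ne_of_gt (hd p)
        push_cast
        field_simp
        exact mul_comm _ _
      have hBtr : B'.trace = B.trace := trace_conj U B hUU'
      rw [Matrix.trace, Finset.sum_congr rfl (fun p _ => hdiag p), ← hBtr, Matrix.trace]
      rfl
    have h3 : (B' * N).trace = ∑ p, ∑ q, (Complex.normSq (B' p q) : ℂ) * (K q p : ℂ) := by
      rw [Matrix.trace]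
      apply Finset.sum_congr rfl; intro p _
      rw [Matrix.diag_apply, Matrix.mul_apply]
      apply Finset.sum_congr rfl; intro q _
      rw [hNdef, Matrix.of_apply]
      calc B' p q * (B' q p * (K q p : ℂ)) = (B' p q * B' q p) * (K q p : ℂ) := by ring
        _ = (Complex.normSq (B' p q) : ℂ) * (K q p : ℂ) := by
            rw [← hBherm.apply q p, Complex.star_def, Complex.mul_conj]
    rw [h2, h3]
  have hre : (A * mq B (A + B)).trace.re
      = B.trace.re - ∑ p, ∑ q, Complex.normSq (B' p q) * K q p := by
    rw [htrace]
    simp only [Complex.sub_re, Complex.re_sum, ← Complex.ofReal_mul, Complex.ofReal_re]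
  -- spectral data of A - B
  have hΔ : (A - B).IsHermitian := hA.1.sub hB.1
  set μ := hΔ.eigenvalues with hμdef
  set V : Matrix m m ℂ := (hΔ.eigenvectorUnitary : Matrix m m ℂ) with hVdef
  have hVV : star V * V = 1 := Matrix.mem_unitaryGroup_iff'.mp hΔ.eigenvectorUnitary.2
  set χ : m → ℂ := fun i => if μ i < 0 then 1 else 0 with hχdef
  set P : Matrix m m ℂ := V * Matrix.diagonal χ * star V with hPdef
  set T : Matrix m m ℂ := star U * P * U with hTdef
  have hχstar : star χ = χ := by
    funext i
    simp only [Pi.star_apply, hχdef]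
    by_cases h : μ i < 0 <;> simp [h]
  have hdiagχherm : (Matrix.diagonal χ).IsHermitian := by
    rw [Matrix.IsHermitian, Matrix.diagonal_conjTranspose, hχstar]
  have hPherm : P.IsHermitian := by
    have h := Matrix.isHermitian_mul_mul_conjTranspose V hdiagχherm
    simpa [hPdef, Matrix.star_eq_conjTranspose] using h
  have hTherm : T.IsHermitian := by
    have h := Matrix.isHermitian_mul_mul_conjTranspose (star U) hPherm
    simpa [hTdef, Matrix.star_eq_conjTranspose, Matrix.conjTranspose_conjTranspose] using h
  have hχ2 : (fun i => χ i * χ i) = χ := by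
    funext i
    simp only [hχdef]
    by_cases h : μ i < 0 <;> simp [h]
  have hdiagχ2 : Matrix.diagonal χ * Matrix.diagonal χ = Matrix.diagonal χ := by
    rw [Matrix.diagonal_mul_diagonal, hχ2]
  have hP2 : P * P = P := by rw [hPdef, conj_mul_conj' V _ _ hVV, hdiagχ2]
  have hT2 : T * T = T := by rw [hTdef, conj_mul_conj U P P hUU', hP2]
  -- sum identities
  have hs1 : ∑ p, ∑ q, (B' p q * T q p).re = ((B * P).trace).re := by
    have hc : ∑ p, ∑ q, B' p q * T q p = (B' * T).trace := by
      rw [Matrix.trace]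
      apply Finset.sum_congr rfl; intro p _
      rw [Matrix.diag_apply, Matrix.mul_apply]
    have hBT : B' * T = star U * (B * P) * U := by
      rw [hB'def, hTdef, conj_mul_conj U B P hUU']
    calc ∑ p, ∑ q, (B' p q * T q p).re = (∑ p, ∑ q, B' p q * T q p).re := by
          simp [Complex.re_sum]
      _ = ((B * P).trace).re := by rw [hc, hBT, trace_conj U (B * P) hUU']
  have hTdiagsum : ∀ p, ∑ q, Complex.normSq (T p q) = (T p p).re := by
    intro p
    have h1 : ∑ q, (Complex.normSq (T p q) : ℂ) = (T * T) p p := by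
      rw [Matrix.mul_apply]
      apply Finset.sum_congr rfl; intro q _
      rw [← hTherm.apply q p, Complex.star_def, Complex.mul_conj]
    rw [hT2] at h1
    have h2 := congrArg Complex.re h1
    simpa [Complex.re_sum] using h2
  have hs2 : ∑ p, ∑ q, ((d p + d q)/2) * Complex.normSq (T p q)
      = (((A + B) * P).trace).re := by
    have hsym : ∀ p q, Complex.normSq (T q p) = Complex.normSq (T p q) := by
      intro p q
      rw [← hTherm.apply p q, Complex.star_def, Complex.normSq_conj]
    have e1 : ∑ p, ∑ q, ((d p + d q)/2) * Complex.normSq (T p q)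
        = (∑ p, ∑ q, d p * Complex.normSq (T p q)) / 2
          + (∑ p, ∑ q, d q * Complex.normSq (T p q)) / 2 := by
      rw [Finset.sum_div, Finset.sum_div, ← Finset.sum_add_distrib]
      apply Finset.sum_congr rfl; intro p _
      rw [Finset.sum_div, Finset.sum_div, ← Finset.sum_add_distrib]
      apply Finset.sum_congr rfl; intro q _
      ring
    have e2 : ∑ p, ∑ q, d q * Complex.normSq (T p q)
        = ∑ p, ∑ q, d p * Complex.normSq (T p q) := by
      rw [Finset.sum_comm]
      apply Finset.sum_congr rfl; intro p _
      apply Finset.sum_congr rfl; intro q _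
      rw [hsym]
    have e3 : ∑ p, ∑ q, d p * Complex.normSq (T p q) = ∑ p, d p * (T p p).re := by
      apply Finset.sum_congr rfl; intro p _
      rw [← Finset.mul_sum, hTdiagsum p]
    have h4 : ∑ p, (d p : ℂ) * T p p = (Matrix.diagonal (RCLike.ofReal ∘ d) * T).trace := by
      rw [Matrix.trace]
      apply Finset.sum_congr rfl; intro p _
      rw [Matrix.diag_apply, Matrix.diagonal_mul]
      rfl
    have h5 : Matrix.diagonal (RCLike.ofReal ∘ d) * T = star U * ((A + B) * P) * U := by
      rw [← hdiagS, hTdef, conj_mul_conj U _ P hUU']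
    have h6 := congrArg Complex.re (h4.trans (by rw [h5, trace_conj U _ hUU']))
    rw [e1, e2, e3, ← h6]
    rw [Complex.re_sum]
    have : ∑ p, ((d p : ℂ) * T p p).re = ∑ p, d p * (T p p).re := by
      apply Finset.sum_congr rfl; intro p _
      rw [Complex.mul_re]
      simp
    rw [this]
    ring
  -- trace identities for A - B
  have hΔP : ((A - B) * P).trace = ∑ i, (μ i : ℂ) * χ i := by
    have h7 : (A - B) * P
        = V * (Matrix.diagonal (RCLike.ofReal ∘ μ) * Matrix.diagonal χ) * star V := by
      conv_lhs => rw [hΔ.spectral_theorem, Unitary.conjStarAlgAut_apply]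
      rw [← hVdef, hPdef, conj_mul_conj' V _ _ hVV]
    rw [h7, trace_conj' V _ hVV, Matrix.diagonal_mul_diagonal, Matrix.trace_diagonal]
    rfl
  have htrΔ : (A - B).trace = ∑ i, (μ i : ℂ) := by
    conv_lhs => rw [hΔ.spectral_theorem, Unitary.conjStarAlgAut_apply]
    rw [← hVdef, trace_conj' V _ hVV, Matrix.trace_diagonal]
    rfl
  have hTN : traceNorm (A - B) = ∑ i, |μ i| := by
    unfold traceNorm
    rw [dif_pos hΔ]
  -- the key entrywise inequality
  have hmain : ∑ p, ∑ q, (2 * (B' p q * T q p).re - (d p + d q)/2 * Complex.normSq (T p q))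
      ≤ ∑ p, ∑ q, Complex.normSq (B' p q) * K q p := by
    apply Finset.sum_le_sum; intro p _
    apply Finset.sum_le_sum; intro q _
    have hc : 0 < d p + d q := by have := hd p; have := hd q; linarith
    have hK : 2 / (d p + d q) ≤ K q p := by
      rw [add_comm]; exact aux_K_ge (hd q) (hd p)
    set a := ‖B' p q‖ with hadef
    set b := ‖T p q‖ with hbdef
    have hre2 : (B' p q * T q p).re ≤ a * b := by
      have h8 : ‖T q p‖ = b := by
        rw [← hTherm.apply q p, Complex.star_def, Complex.norm_conj]
      calc (B' p q * T q p).re ≤ ‖B' p q * T q p‖ := Complex.re_le_norm _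
        _ = a * b := by rw [norm_mul, h8]
    have hnsqB : Complex.normSq (B' p q) = a^2 := (Complex.sq_norm _).symm
    have hnsqT : Complex.normSq (T p q) = b^2 := (Complex.sq_norm _).symm
    have hKge : a^2 * (2/(d p + d q)) ≤ a^2 * K q p :=
      mul_le_mul_of_nonneg_left hK (by positivity)
    have h9 : 2*a*b - (d p + d q)/2 * b^2 ≤ a^2 * (2/(d p + d q)) := by
      rw [mul_div_assoc', le_div_iff₀ hc]
      nlinarith [sq_nonneg (2*a - (d p + d q)*b)]
    rw [hnsqB, hnsqT]
    nlinarith [hre2, h9, hKge]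
  -- assemble
  have hX : 2 * ((B * P).trace).re - (((A + B) * P).trace).re
      ≤ ∑ p, ∑ q, Complex.normSq (B' p q) * K q p := by
    rw [← hs1, ← hs2]
    have hcomb : 2 * (∑ p, ∑ q, (B' p q * T q p).re)
        - ∑ p, ∑ q, ((d p + d q)/2) * Complex.normSq (T p q)
        = ∑ p, ∑ q, (2 * (B' p q * T q p).re
            - (d p + d q)/2 * Complex.normSq (T p q)) := by
      rw [Finset.mul_sum, ← Finset.sum_sub_distrib]
      apply Finset.sum_congr rfl; intro p _
      rw [Finset.mul_sum, ← Finset.sum_sub_distrib]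
    rw [hcomb]
    exact hmain
  have hSP : (((A + B) * P).trace).re = ((A * P).trace).re + ((B * P).trace).re := by
    rw [Matrix.add_mul, Matrix.trace_add, Complex.add_re]
  have hΔPre : ((A * P).trace).re - ((B * P).trace).re
      = ∑ i, (if μ i < 0 then (μ i : ℝ) else 0) := by
    have h10 : ((A - B) * P).trace = (A * P).trace - (B * P).trace := by
      rw [Matrix.sub_mul, Matrix.trace_sub]
    have h11 := congrArg Complex.re (h10.symm.trans hΔP)
    rw [Complex.sub_re] at h11
    rw [h11, Complex.re_sum]
    apply Finset.sum_congr rfl; intro i _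
    by_cases h : μ i < 0 <;> simp [hχdef, h]
  have htrΔre : A.trace.re - B.trace.re = ∑ i, μ i := by
    have h12 := congrArg Complex.re htrΔ
    rw [Matrix.trace_sub, Complex.sub_re, Complex.re_sum] at h12
    simpa using h12
  have htrS : (A + B).trace.re = A.trace.re + B.trace.re := by
    rw [Matrix.trace_add, Complex.add_re]
  have hsum_eq : ∑ i, (if μ i < 0 then (μ i : ℝ) else 0) = ∑ i, (μ i - |μ i|)/2 := by
    apply Finset.sum_congr rfl; intro i _
    by_cases h : μ i < 0
    · rw [if_pos h, abs_of_neg h]; ring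
    · rw [if_neg h, abs_of_nonneg (not_lt.mp h)]; ring
  rw [hre, htrS, hTN]
  have hfin : B.trace.re - (2 * ((B * P).trace).re - (((A + B) * P).trace).re)
      = B.trace.re + (((A * P).trace).re - ((B * P).trace).re) := by
    rw [hSP]; ring
  calc B.trace.re - ∑ p, ∑ q, Complex.normSq (B' p q) * K q p
      ≤ B.trace.re - (2 * ((B * P).trace).re - (((A + B) * P).trace).re) := by
        linarith [hX]
    _ = B.trace.re + ∑ i, (if μ i < 0 then (μ i : ℝ) else 0) := by rw [hfin, hΔPre]
    _ = B.trace.re + ∑ i, (μ i - |μ i|)/2 := by rw [hsum_eq]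
    _ = B.trace.re + ((∑ i, μ i) - ∑ i, |μ i|)/2 := by
        rw [← Finset.sum_div, Finset.sum_sub_distrib]
    _ = (1/2) * (A.trace.re + B.trace.re - ∑ i, |μ i|) := by
        rw [← htrΔre]; ring
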